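/- For the timed-until formula ψ̃ = q U (r ∧ r_{t≥0}) over the time-augmented system whose timer decreases by one per step, the robustness score satisfies ρ_{[ψ̃]}([x_{0:∞}, t₀]) = max_{0 ≤ t ≤ t₀} min( r(x_{t:∞}), min_{0 ≤ k < t} q(x_k) ), i.e., it equals the robustness of the finite-horizon until q U_{[0,t₀]} r. -/
import Mathlib


variable {X A : Type*}

/-- Suffix (time shift) of an infinite trajectory. -/
def shift (x : ℕ → X) (t : ℕ) : ℕ → X := fun n => x (n + t)

/-- The candidate term at witness time `t` in the quantitative semantics of `q U r`:
`min (r (x_{t:∞}), min_{0 ≤ k < t} q (x_k))` (empty min is `⊤`). -/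
noncomputable def untilTerm (q : X → EReal) (r : (ℕ → X) → EReal) (x : ℕ → X) (t : ℕ) : EReal :=
  min (r (shift x t)) (⨅ k : Fin t, q (x k))

/-- Robustness of `q U r` on an infinite trajectory. -/
noncomputable def untilRob (q : X → EReal) (r : (ℕ → X) → EReal) (x : ℕ → X) : EReal :=
  ⨆ t : ℕ, untilTerm q r x t

/-- Robustness of the finite-horizon until `q U_{[0,n]} r`. -/
noncomputable def finUntil (q : X → EReal) (r : (ℕ → X) → EReal) (n : ℕ) (x : ℕ → X) : EReal :=
  ⨆ t ∈ Finset.range (n + 1), untilTerm q r x t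

/-- For the timed-until formula ψ̃ = q U (r ∧ r_{t≥0}) over the time-augmented
system (whose timer starts at t₀ and decreases by one each step), the robustness equals the
finite-horizon until robustness max_{0 ≤ t ≤ t₀} min(r(x_{t:∞}), min_{0 ≤ k < t} q(x_k)). -/
theorem timed_until_eq_finite_horizon (q : X → EReal) (r : (ℕ → X) → EReal)
    (x : ℕ → X) (t0 : ℕ) :
    untilRob (fun p : X × ℤ => q p.1)
      (fun y : ℕ → X × ℤ =>
        min (r (fun n => (y n).1)) (if 0 ≤ (y 0).2 then (⊤ : EReal) else ⊥))
      (fun n => (x n, (t0 : ℤ) - n))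
    = finUntil q r t0 x := by
  have hterm : ∀ t : ℕ,
      untilTerm (fun p : X × ℤ => q p.1)
        (fun y : ℕ → X × ℤ =>
          min (r (fun n => (y n).1)) (if 0 ≤ (y 0).2 then (⊤ : EReal) else ⊥))
        (fun n => (x n, (t0 : ℤ) - n)) t
      = if t ≤ t0 then untilTerm q r x t else ⊥ := by
    intro t
    have hfst : (fun n => ((shift (fun n => (x n, (t0 : ℤ) - n)) t) n).1) = shift x t := rfl
    have htimer : ((shift (fun n => (x n, (t0 : ℤ) - n)) t) 0).2 = (t0 : ℤ) - t := by
      simp [shift]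
    simp only [untilTerm, hfst, htimer]
    by_cases h : t ≤ t0
    · have hle : (0 : ℤ) ≤ (t0 : ℤ) - t := by
        have : (t : ℤ) ≤ t0 := by exact_mod_cast h
        omega
      simp [hle, h]
    · have hlt : ¬ (0 : ℤ) ≤ (t0 : ℤ) - t := by
        have : (t0 : ℤ) < t := by exact_mod_cast Nat.lt_of_not_le h
        omega
      simp [hlt, h]
  unfold untilRob finUntil
  simp only [hterm]
  apply le_antisymm
  · apply iSup_le
    intro t
    by_cases h : t ≤ t0
    · rw [if_pos h]
      exact le_iSup₂ (f := fun t _ => untilTerm q r x t) t (Finset.mem_range.mpr (by omega))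
    · rw [if_neg h]; exact bot_le
  · apply iSup₂_le
    intro t ht
    have h : t ≤ t0 := by simpa [Nat.lt_succ_iff] using ht
    calc untilTerm q r x t = if t ≤ t0 then untilTerm q r x t else ⊥ := by rw [if_pos h]
    _ ≤ _ := le_iSup (fun t => if t ≤ t0 then untilTerm q r x t else (⊥ : EReal)) t
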